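/- Let f : ℝ → ℝ be continuously differentiable on the closed interval [0, π/2] and satisfy f(π/2) = 0. Then ∫_{[0,π/2]} f(θ)² · sin θ dθ ≤ (1/2) · ∫_{[0,π/2]} (f'(θ))² · sin θ dθ. -/

import Mathlib

open MeasureTheory Set Real

private lemma key_ineq (f f' : ℝ → ℝ)
    (hderiv : ∀ θ ∈ Icc (0 : ℝ) (π / 2),
      HasDerivWithinAt f (f' θ) (Icc (0 : ℝ) (π / 2)) θ)
    (hcont : ContinuousOn f' (Icc (0 : ℝ) (π / 2)))
    (hzero : f (π / 2) = 0) (ε : ℝ) (hε : 0 < ε) :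
    ∫ θ in (0:ℝ)..(π/2), 2 * (f θ)^2 * Real.sin θ * (Real.cos θ / (Real.cos θ + ε))
      ≤ ∫ θ in (0:ℝ)..(π/2), (f' θ)^2 * Real.sin θ := by
  have hpi : (0:ℝ) ≤ π/2 := by positivity
  have hsin : ∀ θ ∈ Icc (0:ℝ) (π/2), 0 ≤ Real.sin θ := by
    intro θ hθ
    exact Real.sin_nonneg_of_nonneg_of_le_pi hθ.1 (hθ.2.trans (by linarith [Real.pi_pos]))
  have hcos : ∀ θ ∈ Icc (0:ℝ) (π/2), 0 ≤ Real.cos θ := by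
    intro θ hθ
    exact Real.cos_nonneg_of_mem_Icc ⟨by linarith [hθ.1, Real.pi_pos], hθ.2⟩
  have hden : ∀ θ ∈ Icc (0:ℝ) (π/2), Real.cos θ + ε ≠ 0 := by
    intro θ hθ; have := hcos θ hθ; positivity
  have hfc : ContinuousOn f (Icc (0:ℝ) (π/2)) :=
    fun x hx => (hderiv x hx).continuousWithinAt
  set g : ℝ → ℝ := fun θ => 2 * f θ * f' θ * (Real.sin θ^2 / (Real.cos θ + ε))
      + f θ^2 * ((2 * Real.sin θ * Real.cos θ * (Real.cos θ + ε) + Real.sin θ^3)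
          / (Real.cos θ + ε)^2) with hgdef
  have hG : ∀ θ ∈ Icc (0:ℝ) (π/2),
      HasDerivWithinAt (fun θ => f θ^2 * (Real.sin θ^2 / (Real.cos θ + ε))) (g θ)
        (Icc (0:ℝ) (π/2)) θ := by
    intro θ hθ
    have h1 : HasDerivWithinAt (fun θ => f θ^2) (2 * f θ * f' θ) (Icc (0:ℝ) (π/2)) θ := by
      have := (hderiv θ hθ).fun_pow 2
      simpa [mul_comm, mul_assoc, mul_left_comm] using this
    have hs : HasDerivWithinAt (fun θ => Real.sin θ^2) (2 * Real.sin θ * Real.cos θ)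
        (Icc (0:ℝ) (π/2)) θ := by
      have := ((Real.hasDerivAt_sin θ).hasDerivWithinAt (s := Icc (0:ℝ) (π/2))).fun_pow 2
      simpa [mul_comm, mul_assoc, mul_left_comm] using this
    have hc : HasDerivWithinAt (fun θ => Real.cos θ + ε) (-Real.sin θ)
        (Icc (0:ℝ) (π/2)) θ := by
      simpa using ((Real.hasDerivAt_cos θ).hasDerivWithinAt (s := Icc (0:ℝ) (π/2))).add_const ε
    have hq : HasDerivWithinAt (fun θ => Real.sin θ^2 / (Real.cos θ + ε))
        ((2 * Real.sin θ * Real.cos θ * (Real.cos θ + ε) + Real.sin θ^3)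
          / (Real.cos θ + ε)^2) (Icc (0:ℝ) (π/2)) θ := by
      have := hs.fun_div hc (hden θ hθ)
      refine this.congr_deriv ?_
      ring
    exact h1.mul hq
  have hcontg : ContinuousOn g (Icc (0:ℝ) (π/2)) := by
    apply ContinuousOn.add
    · exact ((continuousOn_const.mul hfc).mul hcont).mul
        (((Real.continuous_sin.continuousOn.pow 2)).div
          (Real.continuous_cos.continuousOn.add continuousOn_const) hden)
    · exact (hfc.pow 2).mul
        ((((continuousOn_const.mul Real.continuous_sin.continuousOn).mul
            Real.continuous_cos.continuousOn).mul
            (Real.continuous_cos.continuousOn.add continuousOn_const)).add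
          (Real.continuous_sin.continuousOn.pow 3) |>.div
          ((Real.continuous_cos.continuousOn.add continuousOn_const).pow 2)
          (fun θ hθ => pow_ne_zero 2 (hden θ hθ)))
  have hintg : IntervalIntegrable g volume 0 (π/2) :=
    (hcontg.mono (by rw [uIcc_of_le hpi])).intervalIntegrable
  have hFTC : ∫ θ in (0:ℝ)..(π/2), g θ = 0 := by
    rw [intervalIntegral.integral_eq_sub_of_hasDeriv_right_of_le hpi
      (fun x hx => (hG x hx).continuousWithinAt)
      (fun x hx => ((hG x (Ioo_subset_Icc_self hx)).hasDerivAt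
        (Icc_mem_nhds hx.1 hx.2)).hasDerivWithinAt) hintg]
    simp [hzero]
  -- nonnegativity of the square integral
  have hnn : (0:ℝ) ≤ ∫ θ in (0:ℝ)..(π/2),
      (f' θ + (Real.sin θ / (Real.cos θ + ε)) * f θ)^2 * Real.sin θ := by
    apply intervalIntegral.integral_nonneg hpi
    intro u hu
    exact mul_nonneg (sq_nonneg _) (hsin u hu)
  -- pointwise identity
  have hcongr : ∫ θ in (0:ℝ)..(π/2),
      (f' θ + (Real.sin θ / (Real.cos θ + ε)) * f θ)^2 * Real.sin θ
      = ∫ θ in (0:ℝ)..(π/2), ((f' θ)^2 * Real.sin θ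
          - 2 * (f θ)^2 * Real.sin θ * (Real.cos θ / (Real.cos θ + ε)) + g θ) := by
    apply intervalIntegral.integral_congr
    intro θ hθ
    rw [uIcc_of_le hpi] at hθ
    have h := hden θ hθ
    simp only [hgdef]
    field_simp
    ring
  have hi1 : IntervalIntegrable (fun θ => (f' θ)^2 * Real.sin θ) volume 0 (π/2) := by
    apply ContinuousOn.intervalIntegrable
    rw [uIcc_of_le hpi]
    exact (hcont.pow 2).mul Real.continuous_sin.continuousOn
  have hi2 : IntervalIntegrable
      (fun θ => 2 * (f θ)^2 * Real.sin θ * (Real.cos θ / (Real.cos θ + ε))) volume 0 (π/2) := by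
    apply ContinuousOn.intervalIntegrable
    rw [uIcc_of_le hpi]
    exact ((continuousOn_const.mul (hfc.pow 2)).mul Real.continuous_sin.continuousOn).mul
      (Real.continuous_cos.continuousOn.div
        (Real.continuous_cos.continuousOn.add continuousOn_const) hden)
  rw [hcongr, intervalIntegral.integral_add (hi1.sub hi2) hintg,
    intervalIntegral.integral_sub hi1 hi2, hFTC] at hnn
  linarith


/-- Weighted Poincaré inequality (II.2.4): if `f` is continuously differentiable on
`[0, π/2]` (with derivative `f'` there) and `f(π/2) = 0`, then
`∫_{[0,π/2]} f(θ)² sin θ dθ ≤ (1/2) ∫_{[0,π/2]} (f'(θ))² sin θ dθ`. -/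
theorem weighted_poincare_hemisphere (f f' : ℝ → ℝ)
    (hderiv : ∀ θ ∈ Icc (0 : ℝ) (π / 2),
      HasDerivWithinAt f (f' θ) (Icc (0 : ℝ) (π / 2)) θ)
    (hcont : ContinuousOn f' (Icc (0 : ℝ) (π / 2)))
    (hzero : f (π / 2) = 0) :
    ∫ θ in Icc (0 : ℝ) (π / 2), (f θ) ^ 2 * Real.sin θ
      ≤ (1 / 2) * ∫ θ in Icc (0 : ℝ) (π / 2), (f' θ) ^ 2 * Real.sin θ := by
  have hpi : (0:ℝ) ≤ π/2 := by positivity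
  have hfc : ContinuousOn f (Icc (0:ℝ) (π/2)) :=
    fun x hx => (hderiv x hx).continuousWithinAt
  have hsin : ∀ θ ∈ Icc (0:ℝ) (π/2), 0 ≤ Real.sin θ := by
    intro θ hθ
    exact Real.sin_nonneg_of_nonneg_of_le_pi hθ.1 (hθ.2.trans (by linarith [Real.pi_pos]))
  have hcos : ∀ θ ∈ Icc (0:ℝ) (π/2), 0 ≤ Real.cos θ := by
    intro θ hθ
    exact Real.cos_nonneg_of_mem_Icc ⟨by linarith [hθ.1, Real.pi_pos], hθ.2⟩
  -- rewrite Icc integrals as set integrals over Ioc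
  rw [MeasureTheory.integral_Icc_eq_integral_Ioc, MeasureTheory.integral_Icc_eq_integral_Ioc]
  set R : ℝ := ∫ θ in Ioc (0:ℝ) (π/2), (f' θ)^2 * Real.sin θ with hR
  -- sequence of approximations
  set F : ℕ → ℝ → ℝ := fun n θ =>
    2 * (f θ)^2 * Real.sin θ * (Real.cos θ / (Real.cos θ + (1:ℝ)/(n+1))) with hF
  have hkey : ∀ n : ℕ, ∫ θ in Ioc (0:ℝ) (π/2), F n θ ≤ R := by
    intro n
    have h := key_ineq f f' hderiv hcont hzero ((1:ℝ)/(n+1)) (by positivity)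
    rw [intervalIntegral.integral_of_le hpi, intervalIntegral.integral_of_le hpi] at h
    exact h
  have hbound : Integrable (fun θ => 2 * (f θ)^2 * Real.sin θ)
      (volume.restrict (Ioc (0:ℝ) (π/2))) := by
    apply ContinuousOn.integrableOn_Icc (a := (0:ℝ)) (b := π/2)
      ((continuousOn_const.mul (hfc.pow 2)).mul Real.continuous_sin.continuousOn)
      |>.mono_set Ioc_subset_Icc_self
  have hmeas : ∀ n, AEStronglyMeasurable (F n) (volume.restrict (Ioc (0:ℝ) (π/2))) := by
    intro n
    apply ContinuousOn.aestronglyMeasurable _ measurableSet_Ioc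
    have hden : ∀ θ ∈ Ioc (0:ℝ) (π/2), Real.cos θ + (1:ℝ)/(n+1) ≠ 0 := by
      intro θ hθ
      have := hcos θ (Ioc_subset_Icc_self hθ)
      positivity
    exact ((continuousOn_const.mul ((hfc.mono Ioc_subset_Icc_self).pow 2)).mul
      Real.continuous_sin.continuousOn).mul
      (Real.continuous_cos.continuousOn.div
        (Real.continuous_cos.continuousOn.add continuousOn_const) hden)
  have hnormb : ∀ n, ∀ᵐ θ ∂(volume.restrict (Ioc (0:ℝ) (π/2))),
      ‖F n θ‖ ≤ 2 * (f θ)^2 * Real.sin θ := by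
    intro n
    filter_upwards [ae_restrict_mem measurableSet_Ioc] with θ hθ
    have hc := hcos θ (Ioc_subset_Icc_self hθ)
    have hs := hsin θ (Ioc_subset_Icc_self hθ)
    have hd : (0:ℝ) < Real.cos θ + (1:ℝ)/(n+1) := by positivity
    have hratio : Real.cos θ / (Real.cos θ + (1:ℝ)/(n+1)) ≤ 1 :=
      (div_le_one hd).2 (by linarith [one_div_pos.2 (by positivity : (0:ℝ) < (n:ℝ)+1)])
    have hratio0 : 0 ≤ Real.cos θ / (Real.cos θ + (1:ℝ)/(n+1)) := div_nonneg hc hd.le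
    have hF0 : 0 ≤ F n θ := by
      apply mul_nonneg (mul_nonneg (by positivity) hs) hratio0
    rw [Real.norm_eq_abs, abs_of_nonneg hF0]
    calc F n θ ≤ 2 * (f θ)^2 * Real.sin θ * 1 := by
          apply mul_le_mul_of_nonneg_left hratio (mul_nonneg (by positivity) hs)
      _ = 2 * (f θ)^2 * Real.sin θ := by ring
  have hlim : ∀ᵐ θ ∂(volume.restrict (Ioc (0:ℝ) (π/2))),
      Filter.Tendsto (fun n => F n θ) Filter.atTop (nhds (2 * (f θ)^2 * Real.sin θ)) := by
    have hsub : Ioo (0:ℝ) (π/2) ⊆ Ioc (0:ℝ) (π/2) := Ioo_subset_Ioc_self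
    have hae : ∀ᵐ θ ∂(volume.restrict (Ioc (0:ℝ) (π/2))), θ ∈ Ioo (0:ℝ) (π/2) := by
      have hne : ∀ᵐ θ ∂(volume.restrict (Ioc (0:ℝ) (π/2))), θ ≠ π/2 := by
        refine ae_restrict_of_ae ?_
        rw [ae_iff]
        convert measure_singleton (μ := (volume : Measure ℝ)) (π/2) using 2
        ext x; simp
      filter_upwards [hne, ae_restrict_mem measurableSet_Ioc] with θ h1 h2
      exact ⟨h2.1, lt_of_le_of_ne h2.2 h1⟩
    filter_upwards [hae] with θ hθ
    have hcpos : 0 < Real.cos θ := Real.cos_pos_of_mem_Ioo ⟨by linarith [hθ.1, Real.pi_pos], hθ.2⟩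
    have h1 : Filter.Tendsto (fun n : ℕ => (1:ℝ)/(n+1)) Filter.atTop (nhds 0) :=
      tendsto_one_div_add_atTop_nhds_zero_nat
    have h2 : Filter.Tendsto (fun n : ℕ => Real.cos θ / (Real.cos θ + (1:ℝ)/(n+1)))
        Filter.atTop (nhds 1) := by
      have := Filter.Tendsto.div (tendsto_const_nhds (x := Real.cos θ))
        ((tendsto_const_nhds (x := Real.cos θ)).add h1) (by simpa using hcpos.ne')
      simpa [div_self hcpos.ne', Pi.div_def] using this
    have := (tendsto_const_nhds (x := 2 * (f θ)^2 * Real.sin θ)).mul h2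
    simpa [hF, one_div] using this
  have htend := MeasureTheory.tendsto_integral_of_dominated_convergence
    (fun θ => 2 * (f θ)^2 * Real.sin θ) hmeas hbound hnormb hlim
  have hfinal : ∫ θ in Ioc (0:ℝ) (π/2), 2 * (f θ)^2 * Real.sin θ ≤ R :=
    le_of_tendsto htend (Filter.Eventually.of_forall hkey)
  have hsplit : ∫ θ in Ioc (0:ℝ) (π/2), 2 * (f θ)^2 * Real.sin θ
      = 2 * ∫ θ in Ioc (0:ℝ) (π/2), (f θ)^2 * Real.sin θ := by
    rw [← MeasureTheory.integral_const_mul]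
    congr 1; ext θ; ring
  rw [hsplit] at hfinal
  linarith
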